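/- arXiv:1112.4658 — 8 statements merged into one kernel-verified Lean document; each statement's English description precedes it below -/
import Mathlib

section
/- Let G : [0,∞) → [0,∞) be continuous, strictly increasing, with G(0) = 0. Then the function y ↦ G(y)/y is unbounded on (0,∞) (i.e. sup_{y>0} G(y)/y = +∞) if and only if there exists β₀ > 0 such that for every β with 0 < β ≤ β₀ the map y ↦ G(βy) has a nonzero fixed point, i.e. there exists y > 0 with G(βy) = y. -/
open Set

/-- **Lemma 1 (i).** For a nonlinearity `G : [0,∞) → [0,∞)` that is continuous, strictly
increasing and satisfies `G 0 = 0`, the map `y ↦ G y / y` is unbounded on `(0,∞)` if and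
only if there exists `β₀ > 0` such that for every `0 < β ≤ β₀` the map `y ↦ G (β y)` has a
nonzero (positive) fixed point. -/
theorem unbounded_iff_exists_beta_fixed_point
    (G : ℝ → ℝ)
    (hGcont : ContinuousOn G (Ici 0))
    (hGmono : StrictMonoOn G (Ici 0))
    (hGnonneg : ∀ y, 0 ≤ y → 0 ≤ G y)
    (hG0 : G 0 = 0) :
    (∀ M : ℝ, ∃ y > 0, M < G y / y) ↔
      ∃ β₀ > 0, ∀ β : ℝ, 0 < β → β ≤ β₀ → ∃ y > 0, G (β * y) = y := by
  constructor
  · intro hM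
    -- find β₀ > 0 with G β₀ < 1 using continuity at 0
    have hcwa : ContinuousWithinAt G (Ici 0) 0 := hGcont 0 (mem_Ici.mpr le_rfl)
    have htend : Filter.Tendsto G (nhdsWithin 0 (Ioi 0)) (nhds 0) := by
      have := hcwa.tendsto
      rw [hG0] at this
      exact this.mono_left (nhdsWithin_mono 0 Ioi_subset_Ici_self)
    have hev : ∀ᶠ x in nhdsWithin 0 (Ioi 0), G x < 1 :=
      htend.eventually_lt_const (by norm_num)
    have hmem : ∀ᶠ x in nhdsWithin 0 (Ioi 0), x ∈ Ioi (0:ℝ) := self_mem_nhdsWithin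
    obtain ⟨β₀, hβ₀G, hβ₀pos⟩ := (hev.and hmem).exists
    refine ⟨β₀, hβ₀pos, ?_⟩
    intro β hβpos hββ₀
    -- h(1) < 0
    have hβ1 : G (β * 1) < 1 := by
      rw [mul_one]
      calc G β ≤ G β₀ := hGmono.monotoneOn (mem_Ici.mpr (le_of_lt hβpos)) (mem_Ici.mpr (le_of_lt hβ₀pos)) hββ₀
        _ < 1 := hβ₀G
    -- find z with G z / z > 1/β
    obtain ⟨z, hzpos, hzrat⟩ := hM (1/β)
    set y₁ := z / β with hy₁def
    have hy₁pos : 0 < y₁ := div_pos hzpos hβpos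
    have hβy₁ : β * y₁ = z := by
      rw [hy₁def]; field_simp
    have hpos : y₁ < G (β * y₁) := by
      rw [hβy₁]
      rw [div_lt_div_iff₀ hβpos hzpos] at hzrat
      rw [hy₁def, div_lt_iff₀ hβpos]
      nlinarith [hzrat]
    -- IVT for h y = G (β * y) - y on uIcc 1 y₁
    set f : ℝ → ℝ := fun y => G (β * y) - y with hfdef
    have hsub : uIcc (1:ℝ) y₁ ⊆ Ici 0 := by
      intro y hy
      rcases hy with ⟨h1, _⟩
      have : min (1:ℝ) y₁ ≤ y := h1
      have hmin : (0:ℝ) < min 1 y₁ := lt_min one_pos hy₁pos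
      exact le_of_lt (lt_of_lt_of_le hmin this)
    have hfc : ContinuousOn f (uIcc 1 y₁) := by
      apply ContinuousOn.sub _ continuousOn_id
      apply hGcont.comp ((continuous_const.mul continuous_id).continuousOn)
      intro y hy
      exact mul_nonneg (le_of_lt hβpos) (hsub hy)
    have hf1 : f 1 < 0 := by simp only [hfdef]; linarith
    have hfy₁ : 0 < f y₁ := by simp only [hfdef]; linarith
    have h0mem : (0:ℝ) ∈ uIcc (f 1) (f y₁) := by
      rw [mem_uIcc]
      left
      exact ⟨le_of_lt hf1, le_of_lt hfy₁⟩
    obtain ⟨y, hymem, hfy⟩ := intermediate_value_uIcc hfc h0mem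
    have hypos : 0 < y := by
      have hmin : (0:ℝ) < min 1 y₁ := lt_min one_pos hy₁pos
      exact lt_of_lt_of_le hmin hymem.1
    exact ⟨y, hypos, by simpa [hfdef, sub_eq_zero] using hfy⟩
  · rintro ⟨β₀, hβ₀pos, hfix⟩ M
    set β := min β₀ (1/(|M|+1)) with hβdef
    have hβpos : 0 < β := lt_min hβ₀pos (by positivity)
    obtain ⟨y, hypos, hy⟩ := hfix β hβpos (min_le_left _ _)
    refine ⟨β * y, mul_pos hβpos hypos, ?_⟩
    rw [hy]
    rw [lt_div_iff₀ (mul_pos hβpos hypos)]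
    have hβle : β ≤ 1/(|M|+1) := min_le_right _ _
    have h1 : M * β ≤ |M| * (1/(|M|+1)) := by
      calc M * β ≤ |M| * β := by
            apply mul_le_mul_of_nonneg_right (le_abs_self M) (le_of_lt hβpos)
        _ ≤ |M| * (1/(|M|+1)) := by
            apply mul_le_mul_of_nonneg_left hβle (abs_nonneg M)
    have h2 : |M| * (1/(|M|+1)) < 1 := by
      rw [mul_one_div, div_lt_one (by positivity)]
      linarith [abs_nonneg M]
    nlinarith [hypos, mul_pos hβpos hypos]
end

section
/- Let G : [0,∞) → [0,∞) be continuous, strictly increasing, with G(0) = 0. Then the function y ↦ G(y)/y is unbounded on (0,∞) if and only if for every A ≥ 0 there exists β_A > 0 such that for all α with 0 ≤ α ≤ A and all β with 0 < β ≤ β_A the map y ↦ G(α + βy) has a nonzero fixed point, i.e. there exists y > 0 with G(α + βy) = y. -/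
open Set

/-- **Lemma 1 (ii).** For a nonlinearity `G : [0,∞) → [0,∞)` that is continuous, strictly
increasing and satisfies `G 0 = 0`, the map `y ↦ G y / y` is unbounded on `(0,∞)` if and
only if for every `A ≥ 0` there is `β_A > 0` such that for all `0 ≤ α ≤ A` and all
`0 < β ≤ β_A` the map `y ↦ G (α + β y)` has a nonzero (positive) fixed point. -/
theorem unbounded_iff_exists_alpha_beta_fixed_point
    (G : ℝ → ℝ)
    (hGcont : ContinuousOn G (Ici 0))
    (hGmono : StrictMonoOn G (Ici 0))
    (hGnonneg : ∀ y, 0 ≤ y → 0 ≤ G y)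
    (hG0 : G 0 = 0) :
    (∀ M : ℝ, ∃ y > 0, M < G y / y) ↔
      ∀ A : ℝ, 0 ≤ A → ∃ βA > 0, ∀ α β : ℝ, 0 ≤ α → α ≤ A → 0 < β → β ≤ βA →
        ∃ y > 0, G (α + β * y) = y := by
  constructor
  · -- forward direction
    intro h A hA
    have hA1 : (0:ℝ) < A + 1 := by linarith
    have hc : 0 < G (A + 1) := by
      have := hGmono (mem_Ici.mpr le_rfl) (mem_Ici.mpr hA1.le) hA1
      rw [hG0] at this; exact this
    refine ⟨1 / (2 * G (A + 1)), by positivity, ?_⟩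
    intro α β hα hαA hβ hββA
    obtain ⟨z₀, hz₀pos, hz₀⟩ := h (1 / β)
    have hz₀lt : z₀ < β * G z₀ := by
      have := (div_lt_div_iff₀ hβ hz₀pos).mp hz₀
      nlinarith
    set f : ℝ → ℝ := fun z => β * G z + α - z with hf
    have hfz₀ : 0 < f z₀ := by show 0 < β * G z₀ + α - z₀; linarith
    have hfA1 : f (A + 1) < 0 := by
      have hβc : β * G (A + 1) ≤ 1 / 2 := by
        have : β ≤ 1 / (2 * G (A + 1)) := hββA
        rw [le_div_iff₀ (by positivity)] at this
        nlinarith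
      show β * G (A + 1) + α - (A + 1) < 0
      linarith
    have hsub : uIcc z₀ (A + 1) ⊆ Ici 0 := fun z hz =>
      le_trans (le_inf hz₀pos.le hA1.le) hz.1
    have hcont : ContinuousOn f (uIcc z₀ (A + 1)) := by
      exact ((continuousOn_const.mul (hGcont.mono hsub)).add continuousOn_const).sub
        continuousOn_id
    have h0mem : (0:ℝ) ∈ uIcc (f z₀) (f (A + 1)) := by
      rw [mem_uIcc]; right; exact ⟨hfA1.le, hfz₀.le⟩
    obtain ⟨z, hzmem, hfz⟩ := intermediate_value_uIcc hcont h0mem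
    have hz0 : 0 < z := lt_of_lt_of_le (lt_inf_iff.mpr ⟨hz₀pos, hA1⟩) hzmem.1
    have hGz : 0 < G z := by
      have := hGmono (mem_Ici.mpr le_rfl) (mem_Ici.mpr hz0.le) hz0
      rw [hG0] at this; exact this
    have hz : β * G z + α - z = 0 := hfz
    refine ⟨G z, hGz, ?_⟩
    have hzz : α + β * G z = z := by linarith
    rw [hzz]
  · -- reverse direction
    intro h M
    obtain ⟨β₀, hβ₀, hfix⟩ := h 0 le_rfl
    set β := min β₀ (1 / (|M| + 1)) with hβdef
    have hβpos : 0 < β := lt_min hβ₀ (by positivity)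
    obtain ⟨y, hy, hfy⟩ := hfix 0 β le_rfl le_rfl hβpos (min_le_left _ _)
    rw [zero_add] at hfy
    refine ⟨β * y, by positivity, ?_⟩
    rw [hfy]
    have hyβ : y / (β * y) = 1 / β := by
      field_simp
    rw [hyβ]
    have hβle : β ≤ 1 / (|M| + 1) := min_le_right _ _
    have : |M| + 1 ≤ 1 / β := by
      rw [le_div_iff₀ hβpos]
      calc (|M| + 1) * β ≤ (|M| + 1) * (1 / (|M| + 1)) := by
            apply mul_le_mul_of_nonneg_left hβle (by positivity)
        _ = 1 := by field_simp
    calc M ≤ |M| := le_abs_self M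
      _ < 1 / β := by linarith
end

section
/- Let K be a kernel and G a nonlinearity satisfying the general conditions, and fix collocation parameters c₁ = 0 < c₂ ≤ 1 (case 2 collocation). Then G(y)/y is unbounded on (0,∞) if and only if there exists H₀ > 0 such that for every h ∈ (0,H₀] there exists Z > 0 satisfying Z = G( h·∫₀^{c₂} K(c₂h, sh)·(s/c₂) ds · Z ), i.e. there are nontrivial collocation solutions on [0,t₁] with t₁ = h for all 0 < h ≤ H₀ (no continuity hypothesis on the kernel is needed). -/
open Set MeasureTheory Filter

/-- Existence of a positive fixed point `Z = G (A·Z)` for small positive `A`, given that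
`G y / y` is unbounded on `(0,∞)`. -/
private lemma exists_fixed_point_aux (G : ℝ → ℝ)
    (hGcont : ContinuousOn G (Ici 0))
    (A : ℝ) (hA : 0 < A) (hA1 : G 1 * A ≤ 1)
    (hU : ∀ M : ℝ, ∃ y > 0, M < G y / y) :
    ∃ Z > 0, Z = G (A * Z) := by
  obtain ⟨y, hy, hy2⟩ := hU (1 / A)
  have hf : ∀ a b : ℝ, 0 ≤ a → ContinuousOn (fun Z : ℝ => G (A * Z) - Z) (Icc a b) := by
    intro a b ha
    refine ContinuousOn.sub ?_ continuousOn_id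
    refine hGcont.comp ((continuous_const.mul continuous_id).continuousOn) ?_
    intro x hx
    exact mem_Ici.mpr (mul_nonneg hA.le (ha.trans hx.1))
  set Z₀ := y / A with hZ₀
  set Z₁ := 1 / A with hZ₁
  have hZ₀pos : 0 < Z₀ := div_pos hy hA
  have hZ₁pos : 0 < Z₁ := div_pos one_pos hA
  have hfZ₀ : 0 < G (A * Z₀) - Z₀ := by
    have h1 : A * Z₀ = y := by rw [hZ₀]; field_simp
    have h2 : Z₀ < G y := by
      have h3 : 1 / A * y < G y := (lt_div_iff₀ hy).mp hy2
      calc Z₀ = 1 / A * y := by rw [hZ₀]; ring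
        _ < G y := h3
    rw [h1]; linarith
  have hfZ₁ : G (A * Z₁) - Z₁ ≤ 0 := by
    have h1 : A * Z₁ = 1 := by rw [hZ₁]; field_simp
    have h2 : G 1 ≤ Z₁ := by
      rw [hZ₁, le_div_iff₀ hA]; exact hA1
    rw [h1]; linarith
  rcases le_total Z₀ Z₁ with hle | hle
  · obtain ⟨Z, hZmem, hZ⟩ := intermediate_value_Icc' hle (hf _ _ hZ₀pos.le) ⟨hfZ₁, hfZ₀.le⟩
    refine ⟨Z, hZ₀pos.trans_le hZmem.1, ?_⟩
    have h : G (A * Z) - Z = 0 := hZ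
    linarith
  · obtain ⟨Z, hZmem, hZ⟩ := intermediate_value_Icc hle (hf _ _ hZ₁pos.le) ⟨hfZ₁, hfZ₀.le⟩
    refine ⟨Z, hZ₁pos.trans_le hZmem.1, ?_⟩
    have h : G (A * Z) - Z = 0 := hZ
    linarith

/-- **Proposition 5 (first step, case 2, no hypothesis on the kernel).** For a kernel `K`
and a nonlinearity `G` satisfying the general conditions and collocation parameters
`c₁ = 0 < c₂ ≤ 1`, the map `G y / y` is unbounded on `(0,∞)` if and only if there is
`H₀ > 0` such that for every stepsize `h ∈ (0, H₀]` the first-step collocation equation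
`Z = G (h · (∫₀^{c₂} K (c₂ h, s h) (s/c₂) ds) · Z)` has a positive solution, i.e. there
are nontrivial collocation solutions on `[0, t₁]` with `t₁ = h`. -/
theorem unbounded_iff_first_step_case2
    (K : ℝ → ℝ → ℝ) (G : ℝ → ℝ)
    (hK_nonneg : ∀ t s, 0 ≤ K t s)
    (hK_supp : ∀ t s, K t s ≠ 0 → 0 ≤ s ∧ s ≤ t)
    (hK_loc : ∀ t > (0 : ℝ), LocallyIntegrable (fun s => K t s) volume)
    (hK_mono : StrictMonoOn (fun t => ∫ s in (0:ℝ)..t, K t s) (Ici 0))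
    (hK_lim : ∀ a : ℝ, 0 ≤ a →
      Tendsto (fun t : ℝ => ∫ s in a..t, K t s) (nhdsWithin a (Ioi a)) (nhds 0))
    (hGcont : ContinuousOn G (Ici 0))
    (hGmono : StrictMonoOn G (Ici 0))
    (hGnonneg : ∀ y, 0 ≤ y → 0 ≤ G y)
    (hG0 : G 0 = 0)
    (c₂ : ℝ) (hc₂ : c₂ ∈ Ioc (0:ℝ) 1) :
    (∀ M : ℝ, ∃ y > 0, M < G y / y) ↔
      ∃ H₀ > (0:ℝ), ∀ h : ℝ, 0 < h → h ≤ H₀ →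
        ∃ Z > 0, Z = G (h * (∫ s in (0:ℝ)..c₂, K (c₂ * h) (s * h) * (s / c₂)) * Z) := by
  obtain ⟨hc₂0, hc₂1⟩ := hc₂
  have h𝒦pos : ∀ t : ℝ, 0 < t → 0 < ∫ s in (0:ℝ)..t, K t s := by
    intro t ht
    have h0 : (∫ s in (0:ℝ)..(0:ℝ), K 0 s) = 0 := intervalIntegral.integral_same
    have := hK_mono (mem_Ici.mpr le_rfl) (mem_Ici.mpr ht.le) ht
    simpa [h0] using this
  have hG1 : 0 < G 1 := by
    have := hGmono (mem_Ici.mpr le_rfl) (mem_Ici.mpr zero_le_one) zero_lt_one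
    simpa [hG0] using this
  -- integrability facts
  have hInt : ∀ h : ℝ, 0 < h → IntervalIntegrable (fun s => K (c₂ * h) s) volume 0 (c₂ * h) := by
    intro h hh
    have ht : 0 < c₂ * h := mul_pos hc₂0 hh
    rw [intervalIntegrable_iff', uIcc_of_le ht.le]
    exact (hK_loc _ ht).integrableOn_isCompact isCompact_Icc
  have hIntc : ∀ h : ℝ, 0 < h →
      IntervalIntegrable (fun s => K (c₂ * h) (s * h)) volume 0 c₂ := by
    intro h hh
    have := (hInt h hh).comp_mul_right (c := h)
    simpa [zero_div, mul_div_cancel_right₀ _ hh.ne'] using this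
  have hIntB : ∀ h : ℝ, 0 < h →
      IntervalIntegrable (fun s => K (c₂ * h) (s * h) * (s / c₂)) volume 0 c₂ := by
    intro h hh
    exact (hIntc h hh).mul_continuousOn (continuous_id.div_const c₂).continuousOn
  -- substitution identity
  have hsub : ∀ h : ℝ, 0 < h →
      (∫ s in (0:ℝ)..c₂, K (c₂ * h) (s * h)) = h⁻¹ * ∫ s in (0:ℝ)..(c₂ * h), K (c₂ * h) s := by
    intro h hh
    have := intervalIntegral.integral_comp_mul_right (a := (0:ℝ)) (b := c₂)
      (fun s => K (c₂ * h) s) hh.ne'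
    simpa [smul_eq_mul] using this
  -- positivity of the weighted integral
  have hBpos : ∀ h : ℝ, 0 < h →
      0 < ∫ s in (0:ℝ)..c₂, K (c₂ * h) (s * h) * (s / c₂) := by
    intro h hh
    have hKi : 0 < ∫ s in (0:ℝ)..c₂, K (c₂ * h) (s * h) := by
      rw [hsub h hh]
      exact mul_pos (inv_pos.mpr hh) (h𝒦pos _ (mul_pos hc₂0 hh))
    have hae1 : 0 ≤ᵐ[volume.restrict (Set.uIoc (0:ℝ) c₂)] fun s => K (c₂ * h) (s * h) :=
      Filter.Eventually.of_forall fun s => hK_nonneg _ _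
    have hsupp : 0 < volume (Function.support (fun s => K (c₂ * h) (s * h)) ∩ Ioc 0 c₂) :=
      ((intervalIntegral.integral_pos_iff_support_of_nonneg_ae' hae1 (hIntc h hh)).mp hKi).2
    have hae2 : 0 ≤ᵐ[volume.restrict (Set.uIoc (0:ℝ) c₂)]
        fun s => K (c₂ * h) (s * h) * (s / c₂) := by
      rw [uIoc_of_le hc₂0.le]
      exact ae_restrict_of_forall_mem measurableSet_Ioc fun s hs =>
        mul_nonneg (hK_nonneg _ _) (div_nonneg hs.1.le hc₂0.le)
    refine (intervalIntegral.integral_pos_iff_support_of_nonneg_ae' hae2 (hIntB h hh)).mpr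
      ⟨hc₂0, ?_⟩
    have hs : Function.support (fun s => K (c₂ * h) (s * h) * (s / c₂)) ∩ Ioc 0 c₂
        = Function.support (fun s => K (c₂ * h) (s * h)) ∩ Ioc 0 c₂ := by
      ext s
      simp only [Function.mem_support, mem_inter_iff, mem_Ioc, ne_eq]
      constructor
      · rintro ⟨h1, h2⟩
        exact ⟨fun hk => h1 (by rw [hk, zero_mul]), h2⟩
      · rintro ⟨h1, h2⟩
        exact ⟨mul_ne_zero h1 (div_ne_zero h2.1.ne' hc₂0.ne'), h2⟩
    rw [hs]; exact hsupp
  -- the key bound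
  have hAle : ∀ h : ℝ, 0 < h →
      h * (∫ s in (0:ℝ)..c₂, K (c₂ * h) (s * h) * (s / c₂)) ≤
        ∫ s in (0:ℝ)..(c₂ * h), K (c₂ * h) s := by
    intro h hh
    have hmono : (∫ s in (0:ℝ)..c₂, K (c₂ * h) (s * h) * (s / c₂)) ≤
        ∫ s in (0:ℝ)..c₂, K (c₂ * h) (s * h) := by
      refine intervalIntegral.integral_mono_on hc₂0.le (hIntB h hh) (hIntc h hh) fun s hs => ?_
      have h1 : s / c₂ ≤ 1 := div_le_one_of_le₀ hs.2 hc₂0.le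
      calc K (c₂ * h) (s * h) * (s / c₂) ≤ K (c₂ * h) (s * h) * 1 :=
            mul_le_mul_of_nonneg_left h1 (hK_nonneg _ _)
        _ = K (c₂ * h) (s * h) := mul_one _
    calc h * (∫ s in (0:ℝ)..c₂, K (c₂ * h) (s * h) * (s / c₂))
        ≤ h * ∫ s in (0:ℝ)..c₂, K (c₂ * h) (s * h) := mul_le_mul_of_nonneg_left hmono hh.le
      _ = h * (h⁻¹ * ∫ s in (0:ℝ)..(c₂ * h), K (c₂ * h) s) := by rw [hsub h hh]
      _ = ∫ s in (0:ℝ)..(c₂ * h), K (c₂ * h) s := by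
          rw [← mul_assoc, mul_inv_cancel₀ hh.ne', one_mul]
  -- smallness of the kernel integral near 0
  have hsmall : ∀ c : ℝ, 0 < c → ∃ ε > 0, ∀ t : ℝ, 0 < t → t < ε →
      (∫ s in (0:ℝ)..t, K t s) < c := by
    intro c hc
    have hev := (hK_lim 0 le_rfl).eventually_lt_const hc
    rw [eventually_nhdsWithin_iff, Metric.eventually_nhds_iff] at hev
    obtain ⟨ε, hε, hball⟩ := hev
    refine ⟨ε, hε, fun t ht htε => hball ?_ (mem_Ioi.mpr ht)⟩
    rw [Real.dist_eq, sub_zero, abs_of_pos ht]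
    exact htε
  constructor
  · -- unbounded ⇒ solutions for small h
    intro hU
    obtain ⟨ε, hε, hεK⟩ := hsmall (G 1)⁻¹ (inv_pos.mpr hG1)
    refine ⟨ε / 2, by positivity, fun h hh hhH => ?_⟩
    have hBp := hBpos h hh
    have hA : 0 < h * ∫ s in (0:ℝ)..c₂, K (c₂ * h) (s * h) * (s / c₂) := mul_pos hh hBp
    have hlt : (∫ s in (0:ℝ)..(c₂ * h), K (c₂ * h) s) < (G 1)⁻¹ := by
      refine hεK _ (mul_pos hc₂0 hh) ?_
      calc c₂ * h ≤ 1 * (ε / 2) := mul_le_mul hc₂1 hhH hh.le zero_le_one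
        _ < ε := by linarith
    have hA1 : G 1 * (h * ∫ s in (0:ℝ)..c₂, K (c₂ * h) (s * h) * (s / c₂)) ≤ 1 := by
      have hAlt : h * (∫ s in (0:ℝ)..c₂, K (c₂ * h) (s * h) * (s / c₂)) < (G 1)⁻¹ :=
        lt_of_le_of_lt (hAle h hh) hlt
      calc G 1 * (h * ∫ s in (0:ℝ)..c₂, K (c₂ * h) (s * h) * (s / c₂))
          ≤ G 1 * (G 1)⁻¹ := mul_le_mul_of_nonneg_left hAlt.le hG1.le
        _ = 1 := mul_inv_cancel₀ hG1.ne'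
    exact exists_fixed_point_aux G hGcont _ hA hA1 hU
  · -- solutions for small h ⇒ unbounded
    rintro ⟨H₀, hH₀, hsol⟩ M
    obtain ⟨ε, hε, hεK⟩ := hsmall (|M| + 1)⁻¹ (by positivity)
    set h := min H₀ (ε / 2) with hhdef
    have hh : 0 < h := lt_min hH₀ (by positivity)
    obtain ⟨Z, hZ, hZeq⟩ := hsol h hh (min_le_left _ _)
    set B := ∫ s in (0:ℝ)..c₂, K (c₂ * h) (s * h) * (s / c₂) with hBdef
    have hBp : 0 < B := hBpos h hh
    have hA : 0 < h * B := mul_pos hh hBp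
    have hlt : h * B < (|M| + 1)⁻¹ := by
      refine lt_of_le_of_lt (hAle h hh) (hεK _ (mul_pos hc₂0 hh) ?_)
      calc c₂ * h ≤ 1 * (ε / 2) := mul_le_mul hc₂1 (min_le_right _ _) hh.le zero_le_one
        _ < ε := by linarith
    refine ⟨h * B * Z, mul_pos hA hZ, ?_⟩
    have hGval : G (h * B * Z) = Z := hZeq.symm
    rw [hGval]
    have hdiv : Z / (h * B * Z) = (h * B)⁻¹ := by
      rw [mul_comm (h * B) Z, ← div_div, div_self hZ.ne', one_div]
    rw [hdiv]
    have h1 : |M| + 1 < (h * B)⁻¹ := by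
      have := (inv_lt_inv₀ (by positivity : (0:ℝ) < (|M| + 1)⁻¹) hA).mpr hlt
      rwa [inv_inv] at this
    calc M ≤ |M| := le_abs_self M
      _ < (h * B)⁻¹ := by linarith
end

section
/- Let G : [0,∞) → [0,∞) be continuous, strictly increasing, with G(0) = 0. Suppose G(y)/y is unbounded near zero (for every δ > 0, sup_{0<y<δ} G(y)/y = +∞) and y/G(y) is unbounded away from zero (for every t > 0, sup_{y>t} y/G(y) = +∞). Then for every α ≥ 0 and every β > 0 there exists y > 0 with G(α + βy) = y. -/
open Set

/-- If `G` satisfies the general conditions, `G y / y` is unbounded near zero, and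
`y / G y` is unbounded away from zero, then for all `α ≥ 0` and `β > 0` the map
`y ↦ G (α + β y)` has a positive fixed point (this underlies unconditional existence). -/
theorem fixed_point_of_unbounded_near_zero_and_away
    (G : ℝ → ℝ)
    (hGcont : ContinuousOn G (Ici 0))
    (hGmono : StrictMonoOn G (Ici 0))
    (hGnonneg : ∀ y, 0 ≤ y → 0 ≤ G y)
    (hG0 : G 0 = 0)
    (hG_near : ∀ δ > (0:ℝ), ∀ M : ℝ, ∃ y : ℝ, 0 < y ∧ y < δ ∧ M < G y / y)
    (hG_away : ∀ t > (0:ℝ), ∀ M : ℝ, ∃ y > t, M < y / G y) :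
    ∀ α : ℝ, 0 ≤ α → ∀ β : ℝ, 0 < β → ∃ y > 0, G (α + β * y) = y := by
  intro α hα β hβ
  -- small side: a > 0 with a < G (α + β a)
  obtain ⟨z, hz0, hz1, hzM⟩ := hG_near 1 one_pos (1/β)
  set a := z / β with ha_def
  have ha : 0 < a := div_pos hz0 hβ
  have hGz : z / β < G z := by
    have h := (div_lt_div_iff₀ hβ hz0).mp hzM
    rw [div_lt_iff₀ hβ]
    linarith
  have hsmall : a < G (α + β * a) := by
    have hβa : β * a = z := by rw [ha_def]; field_simp
    have h1 : G z ≤ G (α + β * a) := by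
      rw [hβa]
      exact hGmono.monotoneOn (le_of_lt hz0) (mem_Ici.mpr (by linarith)) (by linarith)
    linarith
  -- large side: b > 0 with G (α + β b) < b
  obtain ⟨w, hw, hwM⟩ := hG_away (2*α+1) (by linarith) (2*β)
  have hw0 : (0:ℝ) < w := by linarith
  have hGw0 : 0 < G w := by
    have := hGmono (mem_Ici.mpr (le_refl 0)) (mem_Ici.mpr (le_of_lt hw0)) hw0
    rwa [hG0] at this
  have hGwlt : G w < w / (2*β) := by
    have h := (lt_div_iff₀ hGw0).mp hwM
    rw [lt_div_iff₀ (by linarith : (0:ℝ) < 2*β)]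
    nlinarith
  set b := (w - α) / β with hb_def
  have hb : 0 < b := div_pos (by linarith) hβ
  have hβb : α + β * b = w := by rw [hb_def]; field_simp; ring
  have hlarge : G (α + β * b) < b := by
    rw [hβb, hb_def]
    have : w / (2*β) ≤ (w - α) / β := by
      rw [div_le_div_iff₀ (by linarith) hβ]
      nlinarith
    linarith
  -- continuity of F y = G (α + β y) - y on Ici 0
  have hF : ContinuousOn (fun y => G (α + β * y) - y) (Ici 0) := by
    apply ContinuousOn.sub _ continuousOn_id
    apply hGcont.comp ((continuous_const.add (continuous_const.mul continuous_id)).continuousOn)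
    intro y hy
    simp only [mem_Ici, id, Pi.add_apply, Pi.mul_apply] at *
    nlinarith [mul_nonneg hβ.le hy]
  have hsub : uIcc a b ⊆ Ici (0:ℝ) := by
    intro x hx
    have := hx.1
    simp only [mem_Ici]
    rcases le_total a b with h | h
    · rw [uIcc_of_le h] at hx; linarith [hx.1]
    · rw [uIcc_of_ge h] at hx; linarith [hx.1]
  have key := intermediate_value_uIcc (hF.mono hsub)
  have h0 : (0:ℝ) ∈ uIcc ((fun y => G (α + β * y) - y) a) ((fun y => G (α + β * y) - y) b) := by
    simp only [mem_uIcc]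
    right
    exact ⟨by show G (α + β * b) - b ≤ 0; linarith, by show (0:ℝ) ≤ G (α + β * a) - a; linarith⟩
  obtain ⟨c, hc, hFc⟩ := key h0
  refine ⟨c, ?_, by simpa [sub_eq_zero] using hFc⟩
  have : min a b ≤ c := hc.1
  have : 0 < min a b := lt_min ha hb
  linarith [hc.1]
end

section
/- Let K be a kernel and G a nonlinearity satisfying the general conditions, and fix c₁ ∈ (0,1] (case 1 collocation). Suppose G(y)/y is unbounded near zero (for every δ > 0, sup_{0<y<δ} G(y)/y = +∞) and y/G(y) is unbounded away from zero (for every t > 0, sup_{y>t} y/G(y) = +∞). Then there is unconditional existence: for every mesh 0 = t₀ < t₁ < ... < t_N there exists a nontrivial collocation solution on [0,t_N]. -/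
open Set MeasureTheory Filter

/-- Existence of a fixed point `x = G (A + κ x)` for the nonlinearity `G`. -/
lemma fixedPoint_aux (G : ℝ → ℝ)
    (hGcont : ContinuousOn G (Ici 0))
    (hGmono : StrictMonoOn G (Ici 0))
    (hGnonneg : ∀ y, 0 ≤ y → 0 ≤ G y)
    (hG0 : G 0 = 0)
    (hG_near : ∀ δ > (0:ℝ), ∀ M : ℝ, ∃ y : ℝ, 0 < y ∧ y < δ ∧ M < G y / y)
    (hG_away : ∀ t > (0:ℝ), ∀ M : ℝ, ∃ y > t, M < y / G y)
    (A κ : ℝ) (hA : 0 ≤ A) (hκ : 0 ≤ κ) :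
    ∃ x, 0 ≤ x ∧ x = G (A + κ * x) ∧ (A = 0 → 0 < κ → 0 < x) := by
  rcases eq_or_lt_of_le hκ with hκ0 | hκpos
  · refine ⟨G A, hGnonneg A hA, by rw [← hκ0]; ring_nf,
      fun _ h => absurd h (by rw [← hκ0]; exact lt_irrefl 0)⟩
  -- get upper crossing point
  obtain ⟨y, hy_gt, hyG⟩ := hG_away (max 1 (2*A)) (lt_max_iff.mpr (Or.inl one_pos)) (2*κ)
  have hy1 : (1:ℝ) < y := lt_of_le_of_lt (le_max_left _ _) hy_gt
  have hy2A : 2*A < y := lt_of_le_of_lt (le_max_right _ _) hy_gt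
  have hy0 : 0 < y := lt_trans one_pos hy1
  have hGy : 0 < G y := by
    have := hGmono self_mem_Ici (le_of_lt hy0 : (0:ℝ) ≤ y) hy0
    rwa [hG0] at this
  have hGy' : G y < y / (2*κ) := by
    rw [lt_div_iff₀ (by positivity)]
    have : 2*κ * G y < y := by
      have := (lt_div_iff₀ hGy).mp hyG
      linarith
    linarith
  set b := (y - A)/κ with hb_def
  have hb_pos : 0 < b := by
    apply div_pos _ hκpos; linarith
  have hAb : A + κ * b = y := by rw [hb_def]; field_simp; ring
  have hGb : G (A + κ * b) < b := by
    rw [hAb]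
    calc G y < y/(2*κ) := hGy'
    _ ≤ b := by rw [hb_def, div_le_div_iff₀ (by positivity) hκpos]; ring_nf; nlinarith
  have hcontF : ∀ a, 0 ≤ a → ContinuousOn (fun x => G (A + κ * x) - x) (Icc a b) := by
    intro a ha
    apply ContinuousOn.sub _ continuousOn_id
    apply hGcont.comp (by fun_prop)
    intro x hx
    have : 0 ≤ x := le_trans ha hx.1
    simp only [mem_Ici]
    nlinarith
  rcases eq_or_lt_of_le hA with hA0 | hApos
  · -- A = 0 : find strictly positive lower point
    obtain ⟨y₀, hy₀pos, hy₀lt, hy₀G⟩ := hG_near y hy0 (1/κ)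
    set a := y₀ / κ with ha_def
    have ha_pos : 0 < a := div_pos hy₀pos hκpos
    have hab : a < b := by
      rw [ha_def, hb_def, div_lt_div_iff₀ hκpos hκpos]
      nlinarith
    have hFa : 0 < G (A + κ * a) - a := by
      have h1 : A + κ * a = y₀ := by rw [← hA0, ha_def]; field_simp; ring
      rw [h1, ha_def]
      rw [div_lt_div_iff₀ hκpos hy₀pos] at hy₀G
      have : y₀/κ < G y₀ := by rw [div_lt_iff₀ hκpos]; nlinarith
      linarith
    have := intermediate_value_Icc' (le_of_lt hab) (hcontF a (le_of_lt ha_pos))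
    have h0mem : (0:ℝ) ∈ Icc (G (A + κ * b) - b) (G (A + κ * a) - a) :=
      ⟨by linarith, by linarith⟩
    obtain ⟨x, hxmem, hx⟩ := this h0mem
    exact ⟨x, le_trans (le_of_lt ha_pos) hxmem.1, by linarith [hx, sub_eq_zero.mp hx],
      fun _ _ => lt_of_lt_of_le ha_pos hxmem.1⟩
  · -- A > 0
    have hFa : 0 ≤ G (A + κ * 0) - 0 := by
      simpa using hGnonneg A hA
    have := intermediate_value_Icc' (le_of_lt hb_pos) (hcontF 0 le_rfl)
    have h0mem : (0:ℝ) ∈ Icc (G (A + κ * b) - b) (G (A + κ * 0) - 0) := ⟨by linarith, hFa⟩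
    obtain ⟨x, hxmem, hx⟩ := this h0mem
    exact ⟨x, hxmem.1, (sub_eq_zero.mp hx).symm, fun h _ => absurd h (ne_of_gt hApos)⟩

/-- The piecewise constant collocation solution determined by a mesh `t` and
coefficients `Z` (case 1: `m = 1`). -/
noncomputable def pieceConst (t : ℕ → ℝ) (Z : ℕ → ℝ) (N : ℕ) : ℝ → ℝ :=
  fun s => ∑ m ∈ Finset.range N, Set.indicator (Set.Ioc (t m) (t (m + 1))) (fun _ => Z m) s

/-- The case 1 collocation equations (`m = 1`, collocation parameter `c₁`). -/
def IsCase1Sol (K : ℝ → ℝ → ℝ) (G : ℝ → ℝ) (c₁ : ℝ) (N : ℕ) (t : ℕ → ℝ) (Z : ℕ → ℝ) :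
    Prop :=
  ∀ n < N, Z n = G (∫ s in (0:ℝ)..(t n + c₁ * (t (n + 1) - t n)),
    K (t n + c₁ * (t (n + 1) - t n)) s * pieceConst t Z N s)

/-- **Unconditional existence (case 1).** If `K` and `G` satisfy the general conditions,
`c₁ ∈ (0,1]`, `G y / y` is unbounded near zero and `y / G y` is unbounded away from zero,
then for every mesh `0 = t₀ < t₁ < … < t_N` there is a nontrivial collocation solution on
`[0, t_N]`. -/
theorem unconditional_existence_case1
    (K : ℝ → ℝ → ℝ) (G : ℝ → ℝ)
    (hK_nonneg : ∀ t s, 0 ≤ K t s)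
    (hK_supp : ∀ t s, K t s ≠ 0 → 0 ≤ s ∧ s ≤ t)
    (hK_loc : ∀ t > (0 : ℝ), LocallyIntegrable (fun s => K t s) volume)
    (hK_mono : StrictMonoOn (fun t => ∫ s in (0:ℝ)..t, K t s) (Ici 0))
    (hK_lim : ∀ a : ℝ, 0 ≤ a →
      Tendsto (fun t : ℝ => ∫ s in a..t, K t s) (nhdsWithin a (Ioi a)) (nhds 0))
    (hGcont : ContinuousOn G (Ici 0))
    (hGmono : StrictMonoOn G (Ici 0))
    (hGnonneg : ∀ y, 0 ≤ y → 0 ≤ G y)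
    (hG0 : G 0 = 0)
    (hG_near : ∀ δ > (0:ℝ), ∀ M : ℝ, ∃ y : ℝ, 0 < y ∧ y < δ ∧ M < G y / y)
    (hG_away : ∀ t > (0:ℝ), ∀ M : ℝ, ∃ y > t, M < y / G y)
    (c₁ : ℝ) (hc₁ : c₁ ∈ Ioc (0:ℝ) 1) :
    ∀ N : ℕ, 1 ≤ N → ∀ t : ℕ → ℝ, t 0 = 0 → (∀ n < N, t n < t (n + 1)) →
      ∃ Z : ℕ → ℝ, IsCase1Sol K G c₁ N t Z ∧ 0 < Z 0 := by
  intro N hN t ht0 hmesh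
  have hmono : ∀ i j, i ≤ j → j ≤ N → t i ≤ t j := by
    intro i j hij hjN
    induction j with
    | zero => have : i = 0 := Nat.le_zero.mp hij; rw [this]
    | succ j ih =>
      rcases Nat.lt_or_ge i (j+1) with h | h
      · exact le_trans (ih (Nat.lt_succ_iff.mp h) (by omega)) (le_of_lt (hmesh j (by omega)))
      · have : i = j + 1 := le_antisymm hij h
        rw [this]
  have htnn : ∀ n, n ≤ N → 0 ≤ t n := fun n hn => ht0 ▸ hmono 0 n (Nat.zero_le n) hn
  set τ : ℕ → ℝ := fun n => t n + c₁ * (t (n+1) - t n) with hτdef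
  have hτ_gt : ∀ n < N, t n < τ n := by
    intro n hn
    have := hmesh n hn
    have := hc₁.1
    simp only [hτdef]
    nlinarith
  have hτ_le : ∀ n < N, τ n ≤ t (n+1) := by
    intro n hn
    have := hmesh n hn
    have := hc₁.2
    simp only [hτdef]
    nlinarith
  have hτpos : ∀ n < N, 0 < τ n := fun n hn =>
    lt_of_le_of_lt (htnn n (le_of_lt hn)) (hτ_gt n hn)
  -- the master integral identity
  have master : ∀ n, n < N → ∀ Z : ℕ → ℝ,
      (∫ s in (0:ℝ)..(τ n), K (τ n) s * pieceConst t Z N s)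
        = (∑ m ∈ Finset.range n, (∫ s in Ioc (t m) (t (m+1)), K (τ n) s) * Z m)
          + (∫ s in Ioc (t n) (τ n), K (τ n) s) * Z n := by
    intro n hn Z
    have hτn0 : (0:ℝ) ≤ τ n := le_of_lt (hτpos n hn)
    have hKint : IntegrableOn (fun s => K (τ n) s) (Ioc 0 (τ n)) volume :=
      ((hK_loc (τ n) (hτpos n hn)).integrableOn_isCompact isCompact_Icc).mono_set
        Ioc_subset_Icc_self
    have key : ∀ m : ℕ, ∀ s : ℝ,
        K (τ n) s * (Ioc (t m) (t (m+1))).indicator (fun _ => Z m) s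
          = (Ioc (t m) (t (m+1))).indicator (fun s => K (τ n) s * Z m) s := by
      intro m s
      by_cases h : s ∈ Ioc (t m) (t (m+1)) <;> simp [Set.indicator, h]
    calc (∫ s in (0:ℝ)..(τ n), K (τ n) s * pieceConst t Z N s)
        = ∫ s in Ioc (0:ℝ) (τ n), ∑ m ∈ Finset.range N,
            (Ioc (t m) (t (m+1))).indicator (fun s => K (τ n) s * Z m) s := by
          rw [intervalIntegral.integral_of_le hτn0]
          congr 1
          funext s
          simp only [pieceConst, Finset.mul_sum, key]
      _ = ∑ m ∈ Finset.range N, ∫ s in Ioc (0:ℝ) (τ n),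
            (Ioc (t m) (t (m+1))).indicator (fun s => K (τ n) s * Z m) s :=
          integral_finset_sum _ (fun m _ =>
            ((hKint.mul_const (Z m)).indicator measurableSet_Ioc))
      _ = ∑ m ∈ Finset.range N, ∫ s in Ioc (0:ℝ) (τ n) ∩ Ioc (t m) (t (m+1)),
            K (τ n) s * Z m := by
          refine Finset.sum_congr rfl fun m _ => ?_
          rw [MeasureTheory.setIntegral_indicator measurableSet_Ioc]
      _ = ∑ m ∈ Finset.range (n+1), ∫ s in Ioc (0:ℝ) (τ n) ∩ Ioc (t m) (t (m+1)),
            K (τ n) s * Z m := by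
          symm
          apply Finset.sum_subset (Finset.range_subset_range.mpr hn)
          intro m hmN hm
          have hm' : n + 1 ≤ m := by
            simp only [Finset.mem_range] at hmN hm; omega
          have hmN' : m < N := Finset.mem_range.mp hmN
          have hempty : Ioc (0:ℝ) (τ n) ∩ Ioc (t m) (t (m+1)) = ∅ := by
            rw [Set.eq_empty_iff_forall_notMem]
            rintro s ⟨⟨_, hs2⟩, hs3, _⟩
            have h1 : τ n ≤ t m :=
              le_trans (hτ_le n hn) (hmono (n+1) m hm' (le_of_lt hmN'))
            linarith
          rw [hempty, MeasureTheory.setIntegral_empty]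
      _ = (∑ m ∈ Finset.range n, (∫ s in Ioc (t m) (t (m+1)), K (τ n) s) * Z m)
            + (∫ s in Ioc (t n) (τ n), K (τ n) s) * Z n := by
          rw [Finset.sum_range_succ]
          congr 1
          · refine Finset.sum_congr rfl fun m hm => ?_
            have hm' : m < n := Finset.mem_range.mp hm
            have h1 : Ioc (0:ℝ) (τ n) ∩ Ioc (t m) (t (m+1)) = Ioc (t m) (t (m+1)) := by
              rw [Set.Ioc_inter_Ioc, max_eq_right (htnn m (by omega)),
                min_eq_right (le_trans (hmono (m+1) n (by omega) (le_of_lt hn))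
                  (le_of_lt (hτ_gt n hn)))]
            rw [h1, MeasureTheory.integral_mul_const]
          · have h1 : Ioc (0:ℝ) (τ n) ∩ Ioc (t n) (t (n+1)) = Ioc (t n) (τ n) := by
              rw [Set.Ioc_inter_Ioc, max_eq_right (htnn n (le_of_lt hn)),
                min_eq_left (hτ_le n hn)]
            rw [h1, MeasureTheory.integral_mul_const]
  -- nonnegativity of the coefficients
  have hCnn : ∀ n m : ℕ, 0 ≤ ∫ s in Ioc (t m) (t (m+1)), K (τ n) s :=
    fun n m => setIntegral_nonneg measurableSet_Ioc (fun s _ => hK_nonneg _ _)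
  have hκnn : ∀ n : ℕ, 0 ≤ ∫ s in Ioc (t n) (τ n), K (τ n) s :=
    fun n => setIntegral_nonneg measurableSet_Ioc (fun s _ => hK_nonneg _ _)
  -- positivity of κ₀
  have hκ0pos : 0 < ∫ s in Ioc (t 0) (τ 0), K (τ 0) s := by
    have h0N : 0 < N := hN
    have hτ00 : 0 < τ 0 := hτpos 0 h0N
    have := hK_mono self_mem_Ici (mem_Ici.mpr (le_of_lt hτ00)) hτ00
    simp only [intervalIntegral.integral_same] at this
    rw [intervalIntegral.integral_of_le (le_of_lt hτ00)] at this
    rw [ht0]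
    exact this
  -- the inductive construction of the coefficients
  have exists_partial : ∀ n : ℕ, ∃ Z : ℕ → ℝ, (∀ m, 0 ≤ Z m) ∧
      (∀ k < n, Z k = G ((∑ m ∈ Finset.range k,
        (∫ s in Ioc (t m) (t (m+1)), K (τ k) s) * Z m)
        + (∫ s in Ioc (t k) (τ k), K (τ k) s) * Z k)) ∧
      (0 < n → 0 < Z 0) := by
    intro n
    induction n with
    | zero =>
      exact ⟨fun _ => 0, fun _ => le_refl 0, fun k hk => absurd hk (Nat.not_lt_zero k),
        fun h => absurd h (lt_irrefl 0)⟩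
    | succ n ih =>
      obtain ⟨Z, hZnn, hZeq, hZ0⟩ := ih
      set A : ℝ := ∑ m ∈ Finset.range n, (∫ s in Ioc (t m) (t (m+1)), K (τ n) s) * Z m
        with hAdef
      have hAnn : 0 ≤ A :=
        Finset.sum_nonneg fun m _ => mul_nonneg (hCnn n m) (hZnn m)
      obtain ⟨x, hxnn, hxeq, hxpos⟩ := fixedPoint_aux G hGcont hGmono hGnonneg hG0
        hG_near hG_away A (∫ s in Ioc (t n) (τ n), K (τ n) s) hAnn (hκnn n)
      refine ⟨Function.update Z n x, ?_, ?_, ?_⟩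
      · intro m
        rcases eq_or_ne m n with h | h
        · rw [h, Function.update_self]; exact hxnn
        · rw [Function.update_of_ne h]; exact hZnn m
      · intro k hk
        have hsum_eq : ∀ j, j ≤ n →
            (∑ m ∈ Finset.range j, (∫ s in Ioc (t m) (t (m+1)), K (τ j) s)
              * Function.update Z n x m)
            = ∑ m ∈ Finset.range j, (∫ s in Ioc (t m) (t (m+1)), K (τ j) s) * Z m := by
          intro j hj
          refine Finset.sum_congr rfl fun m hm => ?_
          have : m ≠ n := by
            have := Finset.mem_range.mp hm; omega
          rw [Function.update_of_ne this]
        rcases Nat.lt_or_ge k n with h | h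
        · have hkn : k ≠ n := Nat.ne_of_lt h
          rw [Function.update_of_ne hkn, hsum_eq k (le_of_lt h)]
          exact hZeq k h
        · have hkn : k = n := by omega
          subst hkn
          rw [Function.update_self, hsum_eq k le_rfl, ← hAdef]
          exact hxeq
      · intro _
        rcases Nat.eq_zero_or_pos n with h | h
        · subst h
          rw [Function.update_self]
          apply hxpos _ hκ0pos
          simp [hAdef]
        · rw [Function.update_of_ne (Nat.pos_iff_ne_zero.mp h).symm]
          exact hZ0 h
  obtain ⟨Z, hZnn, hZeq, hZ0⟩ := exists_partial N
  refine ⟨Z, ?_, hZ0 hN⟩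
  intro n hn
  have := master n hn Z
  simp only [hτdef] at this
  rw [this]
  have := hZeq n hn
  simp only [hτdef] at this
  exact this
end

section
/- Let G : [0,∞) → [0,∞) be continuous, strictly increasing, with G(0) = 0. Suppose G(y)/y is unbounded near zero (for every δ > 0, sup_{0<y<δ} G(y)/y = +∞) and G(y)/y is bounded away from zero, i.e. there exist M > 0 and τ > 0 with G(y) ≤ M·y for all y > τ. Then for every β with 0 < β < 1/M and every α ≥ 0 there exists y > 0 with G(α + βy) = y. -/
open Set

/-- If `G` satisfies the general conditions, `G y / y` is unbounded near zero, and
`G y / y` is bounded away from zero (there are `M, τ > 0` with `G y ≤ M y` for `y > τ`),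
then for every `β` with `0 < β < 1/M` and every `α ≥ 0` the map `y ↦ G (α + β y)` has a
positive fixed point (this underlies existence for fine meshes). -/
theorem fixed_point_of_bounded_away
    (G : ℝ → ℝ)
    (hGcont : ContinuousOn G (Ici 0))
    (hGmono : StrictMonoOn G (Ici 0))
    (hGnonneg : ∀ y, 0 ≤ y → 0 ≤ G y)
    (hG0 : G 0 = 0)
    (hG_near : ∀ δ > (0:ℝ), ∀ M : ℝ, ∃ y : ℝ, 0 < y ∧ y < δ ∧ M < G y / y)
    (M τ : ℝ) (hM : 0 < M) (hτ : 0 < τ)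
    (hG_bdd : ∀ y : ℝ, τ < y → G y ≤ M * y) :
    ∀ β : ℝ, 0 < β → β < 1 / M → ∀ α : ℝ, 0 ≤ α → ∃ y > 0, G (α + β * y) = y := by
  intro β hβ hβM α hα
  have hMβ : M * β < 1 := by
    have := (lt_div_iff₀ hM).mp hβM
    linarith
  -- a small point where G (α + β a) > a
  obtain ⟨a, ha0, hFa⟩ : ∃ a > 0, a < G (α + β * a) := by
    rcases eq_or_lt_of_le hα with h | h
    · -- α = 0
      obtain ⟨z, hz0, _, hzM⟩ := hG_near 1 one_pos (1 / β)
      refine ⟨z / β, by positivity, ?_⟩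
      have hzβ : z / β < G z := by
        have h' := (div_lt_div_iff₀ hβ hz0).mp hzM
        rw [div_lt_iff₀ hβ]
        linarith
      rw [← h, zero_add, mul_div_cancel₀ _ (ne_of_gt hβ)]
      exact hzβ
    · have hGα : 0 < G α := by
        have := hGmono (mem_Ici.mpr (le_refl 0)) (le_of_lt h) h
        rwa [hG0] at this
      refine ⟨G α, hGα, ?_⟩
      have : G α < G (α + β * G α) := by
        apply hGmono hα
        · exact le_trans hα (by nlinarith)
        · nlinarith
      exact this
  -- a large point where G (α + β b) < b
  set b : ℝ := max a (max (τ / β) ((M * α + 1) / (1 - M * β))) + 1 with hb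
  have hab : a < b := by
    have h := le_max_left a (max (τ / β) ((M * α + 1) / (1 - M * β)))
    simp only [hb]; linarith
  have hbτ : τ < β * b := by
    have h1 : τ / β < b := by
      have h2 := le_trans (le_max_left (τ / β) ((M * α + 1) / (1 - M * β)))
        (le_max_right a (max (τ / β) ((M * α + 1) / (1 - M * β))))
      simp only [hb]; linarith
    calc τ = β * (τ / β) := by field_simp
      _ < β * b := by exact mul_lt_mul_of_pos_left h1 hβ
  have hbM : (M * α + 1) / (1 - M * β) < b := by
    have h2 := le_trans (le_max_right (τ / β) ((M * α + 1) / (1 - M * β)))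
      (le_max_right a (max (τ / β) ((M * α + 1) / (1 - M * β))))
    simp only [hb]; linarith
  have hFb : G (α + β * b) < b := by
    have h1 : τ < α + β * b := by linarith
    have h2 := hG_bdd _ h1
    have h3 : M * α + 1 < b * (1 - M * β) := by
      rw [div_lt_iff₀ (by linarith)] at hbM
      linarith
    nlinarith
  -- IVT
  have hb0 : 0 < b := lt_trans ha0 hab
  have hmaps : ∀ y ∈ Icc a b, α + β * y ∈ Ici (0:ℝ) := by
    intro y hy
    have : 0 < y := lt_of_lt_of_le ha0 hy.1
    have : 0 ≤ β * y := le_of_lt (by positivity)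
    simp only [mem_Ici]; linarith
  have hc : ContinuousOn (fun y => G (α + β * y) - y) (Icc a b) := by
    apply ContinuousOn.sub
    · exact hGcont.comp (by fun_prop) hmaps
    · exact continuousOn_id
  have h0mem : (0:ℝ) ∈ Icc ((fun y => G (α + β * y) - y) b) ((fun y => G (α + β * y) - y) a) := by
    constructor <;> simp <;> linarith
  obtain ⟨y, hy, hy0⟩ := intermediate_value_Icc' (le_of_lt hab) hc h0mem
  refine ⟨y, lt_of_lt_of_le ha0 hy.1, ?_⟩
  simp only at hy0
  linarith
end

section
/- Let G : [0,∞) → [0,∞) be continuous, strictly increasing, with G(0) = 0, and suppose y ↦ G(y)/y is strictly decreasing on (0,∞). Then for every α ≥ 0 and every β > 0 there is at most one y > 0 with G(α + βy) = y. -/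
open Set

/-- If `G` satisfies the general conditions and `y ↦ G y / y` is strictly decreasing on
`(0,∞)`, then for every `α ≥ 0` and `β > 0` the map `y ↦ G (α + β y)` has at most one
positive fixed point (this underlies uniqueness of nontrivial collocation solutions). -/
theorem fixed_point_unique_of_strict_anti
    (G : ℝ → ℝ)
    (hGcont : ContinuousOn G (Ici 0))
    (hGmono : StrictMonoOn G (Ici 0))
    (hGnonneg : ∀ y, 0 ≤ y → 0 ≤ G y)
    (hG0 : G 0 = 0)
    (hG_anti : StrictAntiOn (fun y => G y / y) (Ioi 0)) :
    ∀ α : ℝ, 0 ≤ α → ∀ β : ℝ, 0 < β →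
      ∀ y₁ y₂ : ℝ, 0 < y₁ → 0 < y₂ →
        G (α + β * y₁) = y₁ → G (α + β * y₂) = y₂ → y₁ = y₂ := by
  intro α hα β hβ
  have key : ∀ y₁ y₂ : ℝ, 0 < y₁ → 0 < y₂ →
      G (α + β * y₁) = y₁ → G (α + β * y₂) = y₂ → y₁ < y₂ → False := by
    intro y₁ y₂ hy₁ hy₂ h1 h2 hlt
    have hx₁ : 0 < α + β * y₁ := by positivity
    have hx₂ : 0 < α + β * y₂ := by positivity
    have hx : α + β * y₁ < α + β * y₂ := by nlinarith
    have := hG_anti (mem_Ioi.mpr hx₁) (mem_Ioi.mpr hx₂) hx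
    simp only [h1, h2] at this
    rw [div_lt_div_iff₀ hx₂ hx₁] at this
    nlinarith
  intro y₁ y₂ hy₁ hy₂ h1 h2
  rcases lt_trichotomy y₁ y₂ with h | h | h
  · exact absurd (key y₁ y₂ hy₁ hy₂ h1 h2 h) not_false
  · exact h
  · exact absurd (key y₂ y₁ hy₂ hy₁ h2 h1 h) not_false
end

section
/- Let G : [0,∞) → [0,∞) be continuous, strictly increasing, with G(0) = 0, and let α > 0 and δ > 0. If ∫_δ^{+∞} (s/G(s))^{1/α} ds/s < +∞, then y/G(y) is bounded away from zero: there exist τ > 0 and C > 0 such that y ≤ C·G(y) for all y > τ. -/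
open Set MeasureTheory

/-- **Proposition 10.** If `G` satisfies the general conditions and the Mydlarczyk
integral `∫_δ^∞ (s / G s)^{1/α} ds/s` converges for some `α > 0` and `δ > 0`, then
`y / G y` is bounded away from zero: there are `τ > 0` and `C > 0` with `y ≤ C · G y`
for all `y > τ`. -/
theorem mydlarczyk_implies_y_over_G_bounded_away
    (G : ℝ → ℝ)
    (hGcont : ContinuousOn G (Ici 0))
    (hGmono : StrictMonoOn G (Ici 0))
    (hGnonneg : ∀ y, 0 ≤ y → 0 ≤ G y)
    (hG0 : G 0 = 0)
    (α δ : ℝ) (hα : 0 < α) (hδ : 0 < δ)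
    (hint : IntegrableOn (fun s : ℝ => (s / G s) ^ (1 / α) / s) (Ioi δ) volume) :
    ∃ τ > (0:ℝ), ∃ C > (0:ℝ), ∀ y : ℝ, τ < y → y ≤ C * G y := by
  set f : ℝ → ℝ := fun s => (s / G s) ^ (1 / α) / s with hfdef
  have hGpos : ∀ s : ℝ, 0 < s → 0 < G s := by
    intro s hs
    have := hGmono (le_refl (0:ℝ)) hs.le hs
    rwa [hG0] at this
  have hf_nonneg : ∀ s ∈ Ioi δ, 0 ≤ f s := by
    intro s hs
    have hs0 : 0 < s := hδ.trans hs
    have hG : 0 < G s := hGpos s hs0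
    have : 0 ≤ s / G s := div_nonneg hs0.le hG.le
    exact div_nonneg (Real.rpow_nonneg this _) hs0.le
  set I : ℝ := ∫ s in Ioi δ, f s with hI
  have hInn : 0 ≤ I := setIntegral_nonneg measurableSet_Ioi hf_nonneg
  -- Key bound: for all y ≥ δ, (1/2) * (y / G (2y))^(1/α) ≤ I
  have key : ∀ y : ℝ, δ ≤ y → (1/2) * (y / G (2*y)) ^ (1/α) ≤ I := by
    intro y hy
    have hy0 : 0 < y := hδ.trans_le hy
    have h2y : 0 < 2 * y := by linarith
    have hG2 : 0 < G (2*y) := hGpos _ h2y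
    set c : ℝ := (y / G (2*y)) ^ (1/α) / (2*y) with hc
    have hsub : Ioc y (2*y) ⊆ Ioi δ := fun s hs => hy.trans_lt hs.1
    have hfi : IntegrableOn f (Ioc y (2*y)) volume := hint.mono_set hsub
    have hbound : ∀ s ∈ Ioc y (2*y), c ≤ f s := by
      intro s hs
      have hs0 : 0 < s := hy0.trans hs.1
      have hGs : 0 < G s := hGpos s hs0
      have hGle : G s ≤ G (2*y) := hGmono.monotoneOn hs0.le h2y.le hs.2
      have hdiv : y / G (2*y) ≤ s / G s := div_le_div₀ hs0.le hs.1.le hGs hGle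
      have hA : (y / G (2*y)) ^ (1/α) ≤ (s / G s) ^ (1/α) :=
        Real.rpow_le_rpow (div_nonneg hy0.le hG2.le) hdiv (by positivity)
      exact div_le_div₀ (Real.rpow_nonneg (div_nonneg hs0.le hGs.le) _) hA hs0 hs.2
    have h1 : ∫ _ in Ioc y (2*y), c ≤ ∫ s in Ioc y (2*y), f s :=
      setIntegral_mono_on (integrableOn_const measure_Ioc_lt_top.ne) hfi
        measurableSet_Ioc hbound
    have h2 : (∫ _ in Ioc y (2*y), c) = (1/2) * (y / G (2*y)) ^ (1/α) := by
      rw [setIntegral_const, Real.volume_real_Ioc_of_le (by linarith), smul_eq_mul]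
      rw [hc]
      field_simp
      ring
    have h3 : ∫ s in Ioc y (2*y), f s ≤ I := by
      apply setIntegral_mono_set hint
      · exact (ae_restrict_iff' measurableSet_Ioi).2 (ae_of_all _ hf_nonneg)
      · exact HasSubset.Subset.eventuallyLE hsub
    calc (1/2) * (y / G (2*y)) ^ (1/α) = ∫ _ in Ioc y (2*y), c := h2.symm
      _ ≤ ∫ s in Ioc y (2*y), f s := h1
      _ ≤ I := h3
  -- Conclude
  refine ⟨2*δ, by linarith, 2 * (2*I+1) ^ α, by positivity, ?_⟩
  intro z hz
  have hy : δ ≤ z / 2 := by linarith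
  have hy0 : 0 < z / 2 := hδ.trans_le hy
  have h2y : (2 : ℝ) * (z / 2) = z := by ring
  have hGz : 0 < G z := hGpos z (by linarith)
  have hk := key (z/2) hy
  rw [h2y] at hk
  have hle : (z / 2 / G z) ^ (1/α) ≤ 2*I+1 := by linarith
  have hbase : 0 ≤ z / 2 / G z := div_nonneg hy0.le hGz.le
  have hpow : ((z / 2 / G z) ^ (1/α)) ^ α ≤ (2*I+1) ^ α :=
    Real.rpow_le_rpow (Real.rpow_nonneg hbase _) hle hα.le
  rw [← Real.rpow_mul hbase, one_div, inv_mul_cancel₀ hα.ne', Real.rpow_one] at hpow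
  have : z / 2 ≤ (2*I+1) ^ α * G z := (div_le_iff₀ hGz).1 hpow
  linarith
end
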